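/- Let T be an invertible bounded linear operator on a Banach space X. Then T is expansive if and only if sup_{n∈ℤ} ‖T^n x‖ = ∞ for every nonzero x ∈ X. -/
import Mathlib


/-- an invertible bounded operator `T` on a Banach space is expansive
(for every `x` with `‖x‖ = 1` there is `n ∈ ℤ` with `‖T^n x‖ ≥ 2`) if and only if
`sup_{n ∈ ℤ} ‖T^n x‖ = ∞` for every nonzero `x`. -/
theorem expansive_iff_sup_eq_top {E : Type*} [NormedAddCommGroup E]
    [NormedSpace ℝ E] [CompleteSpace E] (T : E ≃L[ℝ] E) :
    (∀ x : E, ‖x‖ = 1 → ∃ n : ℤ, 2 ≤ ‖(T ^ n) x‖) ↔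
      (∀ x : E, x ≠ 0 → ∀ M : ℝ, ∃ n : ℤ, M ≤ ‖(T ^ n) x‖) := by
  constructor
  · intro h x hx M
    have hxn : (0:ℝ) < ‖x‖ := norm_pos_iff.mpr hx
    have key : ∀ k : ℕ, ∃ n : ℤ, (2:ℝ) ^ k * ‖x‖ ≤ ‖(T ^ n) x‖ := by
      intro k
      induction k with
      | zero => exact ⟨0, by rw [zpow_zero]; show 2 ^ 0 * ‖x‖ ≤ ‖x‖; simp⟩
      | succ k ih =>
        obtain ⟨n, hn⟩ := ih
        set y := (T ^ n) x with hy
        have hyn : (0:ℝ) < ‖y‖ :=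
          lt_of_lt_of_le (by positivity) hn
        have hunit : ‖(‖y‖⁻¹ • y)‖ = 1 := by
          rw [norm_smul, norm_inv, norm_norm, inv_mul_cancel₀ hyn.ne']
        obtain ⟨m, hm⟩ := h _ hunit
        have hsm : ‖(T ^ m) (‖y‖⁻¹ • y)‖ = ‖y‖⁻¹ * ‖(T ^ m) y‖ := by
          rw [map_smul, norm_smul, norm_inv, norm_norm]
        have h2 : 2 * ‖y‖ ≤ ‖(T ^ m) y‖ := by
          rw [hsm] at hm
          calc 2 * ‖y‖ ≤ (‖y‖⁻¹ * ‖(T ^ m) y‖) * ‖y‖ := by nlinarith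
            _ = ‖(T ^ m) y‖ := by field_simp
        refine ⟨m + n, ?_⟩
        have : (T ^ (m + n)) x = (T ^ m) y := by
          rw [hy, zpow_add]; rfl
        rw [this]
        calc (2:ℝ) ^ (k+1) * ‖x‖ = 2 * ((2:ℝ)^k * ‖x‖) := by ring
          _ ≤ 2 * ‖y‖ := by nlinarith
          _ ≤ ‖(T ^ m) y‖ := h2
    obtain ⟨k, hk⟩ := pow_unbounded_of_one_lt (M / ‖x‖) (by norm_num : (1:ℝ) < 2)
    obtain ⟨n, hn⟩ := key k
    refine ⟨n, le_trans ?_ hn⟩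
    rw [div_lt_iff₀ hxn] at hk
    nlinarith
  · intro h x hx
    have : x ≠ 0 := by intro h0; rw [h0, norm_zero] at hx; norm_num at hx
    exact h x this 2
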